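/- Let G be an abelian group with a finitely additive translation invariant measure ν, K a ν-measurable finite index subgroup with ν(K) > 0, A ⊆ G, and B ⊆ G a K-solid set (for all g ∈ G, either ν((g+K) ∩ B) > 0 or (g+K) ∩ B = ∅). Assume ν((A+B) Δ (A+B+K)) = 0. Then for every g ∈ G: ν((g + B) \ (A + B + K)) = 0 if and only if g + B + K ⊆ A + B + K. -/

import Mathlib

open Pointwise

/-- A finitely additive, translation invariant measure on an abelian group `G`,
defined on an algebra `Meas` of "measurable" subsets of `G`, with values in `[0,∞]`. -/
structure FAM (G : Type*) [AddCommGroup G] where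
  Meas : Set G → Prop
  m : Set G → ENNReal
  meas_empty : Meas ∅
  meas_compl : ∀ {A : Set G}, Meas A → Meas Aᶜ
  meas_union : ∀ {A B : Set G}, Meas A → Meas B → Meas (A ∪ B)
  m_empty : m ∅ = 0
  m_union : ∀ {A B : Set G}, Meas A → Meas B → Disjoint A B → m (A ∪ B) = m A + m B
  m_mono : ∀ {A B : Set G}, Meas A → Meas B → A ⊆ B → m A ≤ m B
  meas_vadd : ∀ (t : G) {A : Set G}, Meas A → Meas (t +ᵥ A)
  m_vadd : ∀ (t : G) {A : Set G}, Meas A → m (t +ᵥ A) = m A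

namespace FAM

variable {G : Type*} [AddCommGroup G] (μ : FAM G)

/-- The inner measure associated to `μ`:
`μ_*(S) = sup { μ(C) : C ⊆ S, C measurable }`. -/
noncomputable def inn (S : Set G) : ENNReal := ⨆ (C : Set G) (_ : μ.Meas C ∧ C ⊆ S), μ.m C

/-- The stabilizer of a subset `C` of `G`: `H(C) = {g : C + g = C}`. -/
def stab (C : Set G) : Set G := {g : G | g +ᵥ C = C}

/-- `μ` is symmetric: `-A` is measurable and `μ(-A) = μ(A)` for measurable `A`. -/
def Symm : Prop := ∀ A : Set G, μ.Meas A → μ.Meas (-A) ∧ μ.m (-A) = μ.m A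

end FAM


section Aux
variable {G : Type*} [AddCommGroup G] (μ : FAM G)

lemma FAM.meas_inter {X Y : Set G} (hX : μ.Meas X) (hY : μ.Meas Y) : μ.Meas (X ∩ Y) := by
  have h : X ∩ Y = (Xᶜ ∪ Yᶜ)ᶜ := by simp
  rw [h]
  exact μ.meas_compl (μ.meas_union (μ.meas_compl hX) (μ.meas_compl hY))

lemma FAM.meas_biUnion {ι : Type*} (s : Finset ι) (f : ι → Set G)
    (hf : ∀ i ∈ s, μ.Meas (f i)) : μ.Meas (⋃ i ∈ s, f i) := by
  classical
  induction s using Finset.induction_on with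
  | empty => simpa using μ.meas_empty
  | insert _ _ hnot ih =>
    rw [Finset.set_biUnion_insert]
    exact μ.meas_union (hf _ (Finset.mem_insert_self _ _))
      (ih fun i hi => hf i (Finset.mem_insert_of_mem hi))

lemma FAM.meas_saturated {K : AddSubgroup G} [K.FiniteIndex] (hK : μ.Meas (K : Set G))
    {X : Set G} (hX : X + (K : Set G) = X) : μ.Meas X := by
  classical
  have : Fintype (G ⧸ K) := Fintype.ofFinite _
  have hrep : X = ⋃ q ∈ Finset.univ.filter (fun q : G ⧸ K => Quotient.out q ∈ X),
      (Quotient.out q +ᵥ (K : Set G)) := by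
    ext x
    simp only [Set.mem_iUnion, Finset.mem_filter, Finset.mem_univ, true_and]
    constructor
    · intro hx
      have h1 : -(Quotient.out (QuotientAddGroup.mk x : G ⧸ K)) + x ∈ K :=
        (QuotientAddGroup.eq).mp (Quotient.out_eq _)
      refine ⟨QuotientAddGroup.mk x, ?_, ?_⟩
      · have h2 : Quotient.out (QuotientAddGroup.mk x : G ⧸ K)
            = x + (-(-(Quotient.out (QuotientAddGroup.mk x : G ⧸ K)) + x)) := by abel
        rw [h2, ← hX]
        exact Set.add_mem_add hx (K.neg_mem h1)
      · rw [Set.mem_vadd_set]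
        exact ⟨-(Quotient.out (QuotientAddGroup.mk x : G ⧸ K)) + x, h1, by
          rw [vadd_eq_add]; abel⟩
    · rintro ⟨q, hq, hx⟩
      rw [Set.mem_vadd_set] at hx
      obtain ⟨k, hk, rfl⟩ := hx
      rw [← hX]
      exact Set.add_mem_add hq hk
  rw [hrep]
  exact μ.meas_biUnion _ _ fun q _ => μ.meas_vadd _ hK
end Aux

/-- for a measurable finite index subgroup `K` with `ν(K) > 0`, `A ⊆ G`,
and `B` a `K`-solid set, if `A+B ∼_ν A+B+K` then for every `g`:
`g + B ⊆_ν A+B+K` iff `g + B + K ⊆ A+B+K`. -/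
theorem solid_move {G : Type*} [AddCommGroup G] (μ : FAM G)
    (K : AddSubgroup G) [K.FiniteIndex] (hK : μ.Meas (K : Set G))
    (hK0 : 0 < μ.m (K : Set G))
    (A B : Set G) (hB : μ.Meas B)
    (hsolid : ∀ g : G, 0 < μ.m ((g +ᵥ (K : Set G)) ∩ B) ∨ (g +ᵥ (K : Set G)) ∩ B = ∅)
    (hsim : μ.m (((A + B) \ (A + B + (K : Set G))) ∪ ((A + B + (K : Set G)) \ (A + B))) = 0) :
    ∀ g : G,
      μ.m ((g +ᵥ B) \ (A + B + (K : Set G))) = 0 ↔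
        (g +ᵥ B) + (K : Set G) ⊆ A + B + (K : Set G) := by
  intro g
  set T := A + B + (K : Set G) with hTdef
  have hTK : T + (K : Set G) = T := by
    rw [hTdef, add_assoc]
    simp
  have hTmeas : μ.Meas T := μ.meas_saturated hK hTK
  constructor
  · intro h x hx
    obtain ⟨y, hy, k, hk, rfl⟩ := Set.mem_add.mp hx
    obtain ⟨b, hb, rfl⟩ := Set.mem_vadd_set.mp hy
    -- Show g + b ∈ T using solidity
    set C := (b +ᵥ (K : Set G)) ∩ B with hCdef
    have hCb : b ∈ C := ⟨Set.mem_vadd_set.mpr ⟨0, K.zero_mem, by simp⟩, hb⟩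
    have hCpos : 0 < μ.m C := by
      rcases hsolid b with h' | h'
      · exact h'
      · exact absurd hCb (by rw [hCdef, h']; exact Set.notMem_empty b)
    have hCmeas : μ.Meas C := μ.meas_inter (μ.meas_vadd b hK) hB
    have hex : ∃ c ∈ C, g + c ∈ T := by
      by_contra hno
      push_neg at hno
      have hsub : (g +ᵥ C) ⊆ (g +ᵥ B) ∩ Tᶜ := by
        rintro z hz
        obtain ⟨c, hc, rfl⟩ := Set.mem_vadd_set.mp hz
        exact ⟨Set.mem_vadd_set.mpr ⟨c, hc.2, rfl⟩, hno c hc⟩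
      have hle := μ.m_mono (μ.meas_vadd g hCmeas)
        (μ.meas_inter (μ.meas_vadd g hB) (μ.meas_compl hTmeas)) hsub
      rw [μ.m_vadd g hCmeas] at hle
      rw [← Set.diff_eq, h] at hle
      exact absurd (le_antisymm hle (by positivity)) (ne_of_gt hCpos)
    obtain ⟨c, hc, hcT⟩ := hex
    obtain ⟨k', hk', hck'⟩ := Set.mem_vadd_set.mp hc.1
    -- c = b + k'  (vadd: b + k' = c), so g + b = (g + c) + (-k')
    have hgb : g + b = (g + c) + (-k') := by rw [← hck']; simp only [vadd_eq_add]; abel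
    have hgbT : g + b ∈ T := by
      rw [hgb, ← hTK]
      exact Set.add_mem_add hcT (K.neg_mem hk')
    rw [← hTK]
    exact Set.add_mem_add hgbT hk
  · intro h
    have hempty : (g +ᵥ B) \ T = ∅ := by
      rw [Set.diff_eq_empty]
      intro x hx
      have : x + 0 ∈ (g +ᵥ B) + (K : Set G) := Set.add_mem_add hx K.zero_mem
      rw [add_zero] at this
      exact h this
    rw [hempty, μ.m_empty]
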